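/- Pointwise algebraic lemma: let p, q, P, Q, a, b, μ, ν ∈ ℂ satisfy P = a p + b conj(q), Q = a q + b conj(p), q = μ p + ν conj(p), Q = μ P + ν conj(P), and b = λ' Im(a) with λ' = −2iν/(1 + |ν|² − |μ|²), |μ| + |ν| < 1. Then (|p|² − |q|²) Im(a) = (−1 + |μ|² − |ν|²) Im(p · conj(P)). -/

import Mathlib

open Complex

/-- Pointwise algebraic lemma encoding the chain-rule computation (2.3): if
`P = a p + b conj q`, `Q = a q + b conj p`, `q = μ p + ν conj p`, `Q = μ P + ν conj P`,
`b = λ' Im a` with `λ' = −2iν/(1 + |ν|² − |μ|²)` and `|μ| + |ν| < 1`, then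
`(|p|² − |q|²) Im a = (−1 + |μ|² − |ν|²) Im(p conj P)`. -/
theorem stmt15 (p q P Q a b μ ν : ℂ)
    (hμν : ‖μ‖ + ‖ν‖ < 1)
    (hchain1 : P = a * p + b * (starRingEnd ℂ) q)
    (hchain2 : Q = a * q + b * (starRingEnd ℂ) p)
    (hbeltΦ : q = μ * p + ν * (starRingEnd ℂ) p)
    (hbeltΨ : Q = μ * P + ν * (starRingEnd ℂ) P)
    (hb : b = (-2 * I * ν / (1 + ‖ν‖ ^ 2 - ‖μ‖ ^ 2)) * (a.im : ℂ)) :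
    (‖p‖ ^ 2 - ‖q‖ ^ 2) * a.im =
      (-1 + ‖μ‖ ^ 2 - ‖ν‖ ^ 2) * (p * (starRingEnd ℂ) P).im := by
  have hν0 := norm_nonneg ν
  have hμ0 := norm_nonneg μ
  have hD : (0:ℝ) < 1 + ‖ν‖ ^ 2 - ‖μ‖ ^ 2 := by nlinarith
  have habs : ∀ z : ℂ, ((‖z‖ : ℝ) : ℂ) ^ 2 = z * (starRingEnd ℂ) z := by
    intro z
    rw [← Complex.ofReal_pow, Complex.sq_norm, Complex.mul_conj]
  have hcast : (1 : ℂ) + (‖ν‖ : ℂ) ^ 2 - (‖μ‖ : ℂ) ^ 2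
      = 1 + ν * (starRingEnd ℂ) ν - μ * (starRingEnd ℂ) μ := by
    rw [habs, habs]
  have hD' : (1 : ℂ) + ν * (starRingEnd ℂ) ν - μ * (starRingEnd ℂ) μ ≠ 0 := by
    rw [← hcast]
    intro h
    have h2 : ((1 + ‖ν‖ ^ 2 - ‖μ‖ ^ 2 : ℝ) : ℂ) = 0 := by
      push_cast; linear_combination h
    exact hD.ne' (Complex.ofReal_eq_zero.mp h2)
  have hA : ((a.im : ℝ) : ℂ) * (2 * I) = a - (starRingEnd ℂ) a := by
    have h := Complex.sub_conj a
    push_cast at h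
    linear_combination (-1 : ℂ) * h
  have hB : (((p * (starRingEnd ℂ) P).im : ℝ) : ℂ) * (2 * I)
      = p * (starRingEnd ℂ) P - (starRingEnd ℂ) p * P := by
    have h := Complex.sub_conj (p * (starRingEnd ℂ) P)
    simp only [map_mul, Complex.conj_conj] at h
    push_cast at h
    linear_combination (-1 : ℂ) * h
  have hq' : (starRingEnd ℂ) q
      = (starRingEnd ℂ) μ * (starRingEnd ℂ) p + (starRingEnd ℂ) ν * p := by
    rw [hbeltΦ]
    simp only [map_add, map_mul, Complex.conj_conj]
  have hP' : (starRingEnd ℂ) P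
      = (starRingEnd ℂ) a * (starRingEnd ℂ) p + (starRingEnd ℂ) b * q := by
    rw [hchain1]
    simp only [map_add, map_mul, Complex.conj_conj]
  have e1 : (-2 * I * ν / (1 + ν * (starRingEnd ℂ) ν - μ * (starRingEnd ℂ) μ)) * (a.im : ℂ)
      * (1 + ν * (starRingEnd ℂ) ν - μ * (starRingEnd ℂ) μ) = -2 * I * ν * (a.im : ℂ) := by
    field_simp
  have hbd : b * (1 + ν * (starRingEnd ℂ) ν - μ * (starRingEnd ℂ) μ)
      = -ν * (a - (starRingEnd ℂ) a) := by
    rw [hb, hcast, e1]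
    linear_combination (-ν) * hA
  have hbd' : (starRingEnd ℂ) b * (1 + ν * (starRingEnd ℂ) ν - μ * (starRingEnd ℂ) μ)
      = (starRingEnd ℂ) ν * (a - (starRingEnd ℂ) a) := by
    have h := congrArg (starRingEnd ℂ) hbd
    simp only [map_mul, map_add, map_sub, map_neg, map_one, Complex.conj_conj] at h
    linear_combination h
  rw [← Complex.ofReal_inj]
  have h2I : (2 * I : ℂ) ≠ 0 := by simp [Complex.I_ne_zero]
  refine mul_right_cancel₀ h2I ?_
  push_cast
  linear_combination
    (((‖p‖ : ℝ) : ℂ) ^ 2 - ((‖q‖ : ℝ) : ℂ) ^ 2) * hA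
    + (1 - ((‖μ‖ : ℝ) : ℂ) ^ 2 + ((‖ν‖ : ℝ) : ℂ) ^ 2) * hB
    + (a - (starRingEnd ℂ) a) * (habs p)
    - (a - (starRingEnd ℂ) a) * (habs q)
    - (p * (starRingEnd ℂ) P - (starRingEnd ℂ) p * P) * (habs μ)
    + (p * (starRingEnd ℂ) P - (starRingEnd ℂ) p * P) * (habs ν)
    + ((1 + ν * (starRingEnd ℂ) ν - μ * (starRingEnd ℂ) μ) * p) * hP'
    - ((1 + ν * (starRingEnd ℂ) ν - μ * (starRingEnd ℂ) μ) * (starRingEnd ℂ) p) * hchain1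
    + (p * q) * hbd'
    - ((starRingEnd ℂ) p * (starRingEnd ℂ) q) * hbd
    + (-(a - (starRingEnd ℂ) a) * (starRingEnd ℂ) q + (starRingEnd ℂ) ν * (a - (starRingEnd ℂ) a) * p) * hbeltΦ
    + (-(a - (starRingEnd ℂ) a) * (μ * p + ν * (starRingEnd ℂ) p) + ν * (a - (starRingEnd ℂ) a) * (starRingEnd ℂ) p) * hq'
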